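/- Let F be any 2-CNF on n variables. Then the total number of prime implicants of F is at most 3^{n/3} + 2^{n/2}. -/

import Mathlib

variable {V : Type*}

abbrev Lit (V : Type*) := V × Bool

def evalLit (α : V → Bool) (l : Lit V) : Bool := α l.1 == l.2

abbrev Clause2 (V : Type*) := Lit V × Lit V
abbrev CNF2 (V : Type*) := List (Clause2 V)
abbrev CNF (V : Type*) := List (List (Lit V))

def sat2 (α : V → Bool) (F : CNF2 V) : Prop :=
  ∀ c ∈ F, evalLit α c.1 = true ∨ evalLit α c.2 = true

def satCNF (α : V → Bool) (F : CNF V) : Prop :=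
  ∀ C ∈ F, ∃ l ∈ C, evalLit α l = true

def kCNF (k : ℕ) (F : CNF V) : Prop := ∀ C ∈ F, C.length ≤ k

def extendsR (α : V → Bool) (ρ : V → Option Bool) : Prop :=
  ∀ v b, ρ v = some b → α v = b

def unfix [DecidableEq V] (ρ : V → Option Bool) (v : V) : V → Option Bool :=
  Function.update ρ v none

def implicant2 (ρ : V → Option Bool) (F : CNF2 V) : Prop :=
  ∀ α, extendsR α ρ → sat2 α F

def primeImplicant2 [DecidableEq V] (ρ : V → Option Bool) (F : CNF2 V) : Prop :=
  implicant2 ρ F ∧ ∀ v, ρ v ≠ none → ¬ implicant2 (unfix ρ v) F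

def partialPI [DecidableEq V] (ρ : V → Option Bool) (F : CNF2 V) : Prop :=
  primeImplicant2 ρ F ∧ ∃ v, ρ v = none

def implicantC (ρ : V → Option Bool) (F : CNF V) : Prop :=
  ∀ α, extendsR α ρ → satCNF α F

def primeImplicantC [DecidableEq V] (ρ : V → Option Bool) (F : CNF V) : Prop :=
  implicantC ρ F ∧ ∀ v, ρ v ≠ none → ¬ implicantC (unfix ρ v) F

def implicantF (ρ : V → Option Bool) (f : (V → Bool) → Bool) : Prop :=
  ∀ α, extendsR α ρ → f α = true

def primeImplicantF [DecidableEq V] (ρ : V → Option Bool) (f : (V → Bool) → Bool) : Prop :=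
  implicantF ρ f ∧ ∀ v, ρ v ≠ none → ¬ implicantF (unfix ρ v) f

def negLit (l : Lit V) : Lit V := (l.1, !l.2)

def edge (F : CNF2 V) (u v : Lit V) : Prop :=
  ∃ c ∈ F, (u = negLit c.1 ∧ v = c.2) ∨ (u = negLit c.2 ∧ v = c.1)

def impliesL (F : CNF2 V) : Lit V → Lit V → Prop := Relation.TransGen (edge F)

def onCycle (F : CNF2 V) (u : Lit V) : Prop := impliesL F u u

def acyclicD (F : CNF2 V) : Prop := ∀ u, ¬ onCycle F u

def looplessD (F : CNF2 V) : Prop := ∀ u, ¬ edge F u u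

def litVal (ρ : V → Option Bool) (l : Lit V) : Option Bool := (ρ l.1).map (· == l.2)

def Aset (ρ : V → Option Bool) : Set (Lit V) := {l | litVal ρ l = some false}
def Bset (ρ : V → Option Bool) : Set (Lit V) := {l | litVal ρ l = some true}
def Cset (ρ : V → Option Bool) : Set (Lit V) := {l | litVal ρ l = none}

def Nminus (F : CNF2 V) (S : Set (Lit V)) : Set (Lit V) :=
  {u | u ∉ S ∧ ∃ v ∈ S, impliesL F u v}
def Nplus (F : CNF2 V) (S : Set (Lit V)) : Set (Lit V) :=
  {v | v ∉ S ∧ ∃ u ∈ S, impliesL F u v}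

def Tfml (m : ℕ) : CNF2 (Fin m × Fin 3) :=
  (List.finRange m).flatMap (fun i =>
    [(((i, 0), true), ((i, 1), true)),
     (((i, 1), true), ((i, 2), true)),
     (((i, 0), true), ((i, 2), true))])

def adjVar (F : CNF2 V) (x y : V) : Prop :=
  x ≠ y ∧ ∃ u v : Lit V, u.1 = x ∧ v.1 = y ∧ (impliesL F u v ∨ impliesL F v u)

/-! ### Auxiliary development -/

open scoped Classical

section Aux

set_option linter.unusedSectionVars false

variable {V : Type*} [DecidableEq V]

/-- A clause is covered by `ρ` if one of its literals is fixed true. -/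
def covered (ρ : V → Option Bool) (c : Clause2 V) : Prop :=
  litVal ρ c.1 = some true ∨ litVal ρ c.2 = some true

def tautFree (F : CNF2 V) : Prop := ∀ c ∈ F, c.1 ≠ negLit c.2

def varsIn (F : CNF2 V) (s : Finset V) : Prop := ∀ c ∈ F, c.1.1 ∈ s ∧ c.2.1 ∈ s

lemma litVal_true_iff {ρ : V → Option Bool} {l : Lit V} :
    litVal ρ l = some true ↔ ρ l.1 = some l.2 := by
  unfold litVal
  cases h : ρ l.1 with
  | none => simp
  | some a => cases a <;> cases hb : l.2 <;> simp [hb]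

lemma litVal_false_iff {ρ : V → Option Bool} {l : Lit V} :
    litVal ρ l = some false ↔ ρ l.1 = some (!l.2) := by
  unfold litVal
  cases h : ρ l.1 with
  | none => simp
  | some a => cases a <;> cases hb : l.2 <;> simp [hb]

lemma litVal_none_iff {ρ : V → Option Bool} {l : Lit V} :
    litVal ρ l = none ↔ ρ l.1 = none := by
  unfold litVal
  cases h : ρ l.1 <;> simp

@[simp] lemma negLit_negLit (l : Lit V) : negLit (negLit l) = l := by
  simp [negLit]

@[simp] lemma negLit_fst (l : Lit V) : (negLit l).1 = l.1 := rfl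

lemma litVal_negLit_true_iff {ρ : V → Option Bool} {l : Lit V} :
    litVal ρ (negLit l) = some true ↔ litVal ρ l = some false := by
  rw [litVal_true_iff, litVal_false_iff]; rfl

lemma litVal_negLit_false_iff {ρ : V → Option Bool} {l : Lit V} :
    litVal ρ (negLit l) = some false ↔ litVal ρ l = some true := by
  rw [litVal_false_iff, litVal_true_iff]; simp [negLit]

lemma litVal_negLit_none_iff {ρ : V → Option Bool} {l : Lit V} :
    litVal ρ (negLit l) = none ↔ litVal ρ l = none := by
  rw [litVal_none_iff, litVal_none_iff]; rfl

lemma self_ne_negLit (l : Lit V) : l ≠ negLit l := by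
  intro h
  have := congrArg Prod.snd h
  simp [negLit] at this

/-- Every total extension of `ρ` obtained by filling free variables arbitrarily. -/
lemma implicant_iff {ρ : V → Option Bool} {F : CNF2 V} (ht : tautFree F) :
    implicant2 ρ F ↔ ∀ c ∈ F, covered ρ c := by
  constructor
  · intro h c hc
    by_contra hnc
    rw [covered, not_or] at hnc
    obtain ⟨h1, h2⟩ := hnc
    set α : V → Bool := fun v =>
      if v = c.1.1 then !c.1.2 else if v = c.2.1 then !c.2.2 else (ρ v).getD true with hα
    have hext : extendsR α ρ := by
      intro v b hv
      by_cases hv1 : v = c.1.1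
      · subst hv1
        have : ρ c.1.1 ≠ some c.1.2 := fun hh => h1 (litVal_true_iff.2 hh)
        rw [hv] at this
        have hb : b = !c.1.2 := by
          cases b <;> cases hb2 : c.1.2 <;> simp_all
        simp [hα, hb]
      · by_cases hv2 : v = c.2.1
        · subst hv2
          have : ρ c.2.1 ≠ some c.2.2 := fun hh => h2 (litVal_true_iff.2 hh)
          rw [hv] at this
          have hb : b = !c.2.2 := by
            cases b <;> cases hb2 : c.2.2 <;> simp_all
          simp [hα, hb, hv1]
        · simp [hα, hv1, hv2, hv]
    have hsat := h α hext c hc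
    have he1 : evalLit α c.1 = false := by
      unfold evalLit
      have : α c.1.1 = !c.1.2 := by simp [hα]
      rw [this]; cases c.1.2 <;> simp
    have he2 : evalLit α c.2 = false := by
      unfold evalLit
      have hαv : α c.2.1 = !c.2.2 := by
        by_cases hco : c.2.1 = c.1.1
        · have hsnd : c.2.2 = c.1.2 := by
            by_contra hne
            apply ht c hc
            have : c.1.2 = !c.2.2 := by
              cases hs1 : c.1.2 <;> cases hs2 : c.2.2 <;> simp_all
            exact Prod.ext (by simp [negLit, hco]) (by simp [negLit, this])
          simp [hα, hco, hsnd]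
        · simp [hα, hco]
      rw [hαv]; cases c.2.2 <;> simp
    rw [he1, he2] at hsat
    simp at hsat
  · intro h α hext c hc
    rcases h c hc with h1 | h1
    · left
      rw [litVal_true_iff] at h1
      unfold evalLit
      rw [hext _ _ h1]
      simp
    · right
      rw [litVal_true_iff] at h1
      unfold evalLit
      rw [hext _ _ h1]
      simp

end Aux

section Digraph

set_option linter.unusedSectionVars false

variable {V : Type*} [DecidableEq V]

lemma edge_skew {F : CNF2 V} {u v : Lit V} (h : edge F u v) : edge F (negLit v) (negLit u) := by
  obtain ⟨c, hc, h1 | h1⟩ := h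
  · exact ⟨c, hc, Or.inr ⟨by rw [h1.2], by rw [h1.1, negLit_negLit]⟩⟩
  · exact ⟨c, hc, Or.inl ⟨by rw [h1.2], by rw [h1.1, negLit_negLit]⟩⟩

lemma impliesL_neg {F : CNF2 V} {u v : Lit V} (h : impliesL F u v) :
    impliesL F (negLit v) (negLit u) := by
  induction h with
  | single e => exact Relation.TransGen.single (edge_skew e)
  | tail _ e ih => exact Relation.TransGen.head (edge_skew e) ih

lemma edge_true {ρ : V → Option Bool} {F : CNF2 V} (ht : tautFree F)
    (h : implicant2 ρ F) {u w : Lit V} (e : edge F u w)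
    (hu : litVal ρ u ≠ some false) : litVal ρ w = some true := by
  obtain ⟨c, hc, h1 | h1⟩ := e
  · rcases (implicant_iff ht).1 h c hc with hcov | hcov
    · exact absurd (by rw [h1.1, litVal_negLit_false_iff]; exact hcov) hu
    · rw [h1.2]; exact hcov
  · rcases (implicant_iff ht).1 h c hc with hcov | hcov
    · rw [h1.2]; exact hcov
    · exact absurd (by rw [h1.1, litVal_negLit_false_iff]; exact hcov) hu

lemma reach_true {ρ : V → Option Bool} {F : CNF2 V} (ht : tautFree F)
    (h : implicant2 ρ F) {u w : Lit V} (hr : impliesL F u w)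
    (hu : litVal ρ u ≠ some false) : litVal ρ w = some true := by
  induction hr with
  | single e => exact edge_true ht h e hu
  | tail _ e ih => exact edge_true ht h e (by rw [ih]; simp)

lemma edge_var_mem {F : CNF2 V} {s : Finset V} (hv : varsIn F s) {u w : Lit V}
    (e : edge F u w) : u.1 ∈ s ∧ w.1 ∈ s := by
  obtain ⟨c, hc, h1 | h1⟩ := e
  · exact ⟨by rw [h1.1, negLit_fst]; exact (hv c hc).1, by rw [h1.2]; exact (hv c hc).2⟩
  · exact ⟨by rw [h1.1, negLit_fst]; exact (hv c hc).2, by rw [h1.2]; exact (hv c hc).1⟩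

lemma impliesL_var_mem {F : CNF2 V} {s : Finset V} (hv : varsIn F s) {u w : Lit V}
    (hr : impliesL F u w) : u.1 ∈ s ∧ w.1 ∈ s := by
  induction hr with
  | single e => exact edge_var_mem hv e
  | tail _ e ih => exact ⟨ih.1, (edge_var_mem hv e).2⟩

/-- Support: every fixed variable of a prime implicant has a critical clause, which is
either a unit clause or an edge from a non-false literal. -/
lemma prime_support {ρ : V → Option Bool} {F : CNF2 V} (ht : tautFree F)
    (h : primeImplicant2 ρ F) {v : V} {b : Bool} (hv : ρ v = some b) :
    (((v, b), ((v, b) : Lit V)) ∈ F) ∨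
      ∃ w, edge F w (v, b) ∧ litVal ρ w ≠ some false := by
  have hni := h.2 v (by rw [hv]; simp)
  rw [implicant_iff ht] at hni
  push_neg at hni
  obtain ⟨c, hc, hnc⟩ := hni
  rw [covered, not_or] at hnc
  obtain ⟨h1, h2⟩ := hnc
  have hcov := (implicant_iff ht).1 h.1 c hc
  have hval : ∀ l : Lit V, l.1 ≠ v → litVal (unfix ρ v) l = litVal ρ l := by
    intro l hl
    unfold litVal unfix
    rw [Function.update_of_ne hl]
  -- the literal that was true under ρ must be on v with value b
  have key : ∀ l : Lit V, litVal ρ l = some true → litVal (unfix ρ v) l ≠ some true →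
      l = (v, b) := by
    intro l htr hfa
    by_cases hlv : l.1 = v
    · have : ρ l.1 = some l.2 := litVal_true_iff.1 htr
      rw [hlv, hv] at this
      have : l.2 = b := by injection this with h'; exact h'.symm
      exact Prod.ext hlv this
    · exact absurd (by rw [hval l hlv]; exact htr) hfa
  rcases hcov with htr | htr
  · have hc1 : c.1 = (v, b) := key c.1 htr h1
    -- analyze c.2
    by_cases h22 : c.2.1 = v
    · by_cases hbb : c.2.2 = b
      · left
        have : c.2 = (v, b) := Prod.ext h22 hbb
        have hcc : c = ((v,b),(v,b)) := Prod.ext hc1 this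
        rwa [hcc] at hc
      · exfalso
        apply ht c hc
        rw [hc1]
        have : negLit c.2 = (v, b) := by
          unfold negLit
          refine Prod.ext h22 ?_
          cases hb2 : c.2.2 <;> cases b <;> simp_all
        rw [this]
    · right
      refine ⟨negLit c.2, ⟨c, hc, Or.inr ⟨rfl, hc1.symm⟩⟩, ?_⟩
      intro hf
      rw [litVal_negLit_true_iff.symm, negLit_negLit] at hf
      rw [hval c.2 h22] at h2
      exact h2 hf
  · have hc2 : c.2 = (v, b) := key c.2 htr h2
    by_cases h11 : c.1.1 = v
    · by_cases hbb : c.1.2 = b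
      · left
        have : c.1 = (v, b) := Prod.ext h11 hbb
        have hcc : c = ((v,b),(v,b)) := Prod.ext this hc2
        rwa [hcc] at hc
      · exfalso
        apply ht c hc
        rw [hc2]
        have : negLit ((v : V), b) = c.1 := by
          unfold negLit
          refine Prod.ext h11.symm ?_
          cases hb2 : c.1.2 <;> cases b <;> simp_all
        exact this.symm
    · right
      refine ⟨negLit c.1, ⟨c, hc, Or.inl ⟨rfl, hc2.symm⟩⟩, ?_⟩
      intro hf
      rw [litVal_negLit_true_iff.symm, negLit_negLit] at hf
      rw [hval c.1 h11] at h1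
      exact h1 hf

lemma fixed_var_mem {ρ : V → Option Bool} {F : CNF2 V} {s : Finset V} (ht : tautFree F)
    (hv : varsIn F s) (h : primeImplicant2 ρ F) {v : V} {b : Bool} (hvb : ρ v = some b) :
    v ∈ s := by
  rcases prime_support ht h hvb with hu | ⟨w, e, _⟩
  · exact (hv _ hu).1
  · exact (edge_var_mem hv e).2

lemma not_fixed_of_not_mem {ρ : V → Option Bool} {F : CNF2 V} {s : Finset V} (ht : tautFree F)
    (hv : varsIn F s) (h : primeImplicant2 ρ F) {v : V} (hvs : v ∉ s) : ρ v = none := by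
  cases hρ : ρ v with
  | none => rfl
  | some b => exact absurd (fixed_var_mem ht hv h hρ) hvs

/-- If some literal and its negation imply each other, there are no prime implicants. -/
lemma bad_no_PI {ρ : V → Option Bool} {F : CNF2 V} (ht : tautFree F)
    {l : Lit V} (h1 : impliesL F l (negLit l)) (h2 : impliesL F (negLit l) l)
    (h : implicant2 ρ F) : False := by
  cases hval : litVal ρ l with
  | none =>
    have := reach_true ht h h1 (by rw [hval]; simp)
    rw [litVal_negLit_true_iff] at this
    rw [hval] at this; exact (by simp at this)
  | some b =>
    cases b with
    | true =>
      have := reach_true ht h h1 (by rw [hval]; simp)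
      rw [litVal_negLit_true_iff] at this
      rw [hval] at this; exact (by simp at this)
    | false =>
      have hneg : litVal ρ (negLit l) = some true := litVal_negLit_true_iff.2 hval
      have := reach_true ht h h2 (by rw [hneg]; simp)
      rw [hval] at this; exact (by simp at this)

end Digraph

section Acyclic

set_option linter.unusedSectionVars false
set_option maxHeartbeats 1000000

variable {V : Type*} [DecidableEq V] [Fintype V]

/-- Literals forced by unit clauses (and their implication closure). -/
def R0set (F : CNF2 V) : Set (Lit V) :=
  {w | ∃ l, ((l, l) : Clause2 V) ∈ F ∧ (l = w ∨ impliesL F l w)}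

lemma R0_true {ρ : V → Option Bool} {F : CNF2 V} (ht : tautFree F)
    (h : implicant2 ρ F) {w : Lit V} (hw : w ∈ R0set F) : litVal ρ w = some true := by
  obtain ⟨l, hl, hlw⟩ := hw
  have hl1 : litVal ρ l = some true := by
    rcases (implicant_iff ht).1 h (l, l) hl with hcov | hcov <;> exact hcov
  rcases hlw with rfl | hr
  · exact hl1
  · exact reach_true ht h hr (by rw [hl1]; simp)

/-- Descent: with an acyclic implication digraph, every true literal of a prime implicant
is reachable from a unit clause or from a free literal. -/
lemma descent {ρ : V → Option Bool} {F : CNF2 V} (ht : tautFree F)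
    (hacyc : ∀ u, ¬ impliesL F u u) (h : primeImplicant2 ρ F) :
    ∀ t : Lit V, litVal ρ t = some true →
      t ∈ R0set F ∨ ∃ c, litVal ρ c = none ∧ impliesL F c t := by
  have hwf : WellFounded (impliesL F) := by
    haveI : IsTrans (Lit V) (impliesL F) := ⟨fun _ _ _ hab hbc => hab.trans hbc⟩
    haveI : IsIrrefl (Lit V) (impliesL F) := ⟨hacyc⟩
    exact Finite.wellFounded_of_trans_of_irrefl _
  intro t
  induction t using hwf.induction with
  | _ t IH =>
    intro htt
    have hvb : ρ t.1 = some t.2 := litVal_true_iff.1 htt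
    have hsup := prime_support ht h hvb
    rw [Prod.mk.eta] at hsup
    rcases hsup with hu | ⟨w, e, hwv⟩
    · exact Or.inl ⟨t, hu, Or.inl rfl⟩
    · cases hval : litVal ρ w with
      | none => exact Or.inr ⟨w, hval, Relation.TransGen.single e⟩
      | some b =>
        cases b with
        | false => exact absurd hval hwv
        | true =>
          rcases IH w (Relation.TransGen.single e) hval with hR | ⟨c, hc1, hc2⟩
          · left
            obtain ⟨l, hl, hlw⟩ := hR
            refine ⟨l, hl, Or.inr ?_⟩
            rcases hlw with rfl | hr
            · exact Relation.TransGen.single e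
            · exact hr.tail e
          · exact Or.inr ⟨c, hc1, hc2.tail e⟩

/-- In the acyclic case there is at most one prime implicant fixing all of `s`. -/
lemma acyclic_full_subsingleton {F : CNF2 V} {s : Finset V} (ht : tautFree F)
    (hacyc : ∀ u, ¬ impliesL F u u) (hv : varsIn F s) :
    Set.Subsingleton {ρ : V → Option Bool | primeImplicant2 ρ F ∧ ∀ v ∈ s, ρ v ≠ none} := by
  rintro ρ1 ⟨h1, hf1⟩ ρ2 ⟨h2, hf2⟩
  have key : ∀ (ρa ρb : V → Option Bool), primeImplicant2 ρa F →
      primeImplicant2 ρb F → (∀ v ∈ s, ρa v ≠ none) →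
      ∀ v b, ρa v = some b → ρb v = some b := by
    intro ρa ρb ha hb hfa v b hab
    have htt : litVal ρa (v, b) = some true := litVal_true_iff.2 hab
    rcases descent ht hacyc ha (v, b) htt with hR | ⟨c, hc1, hc2⟩
    · exact litVal_true_iff.1 (R0_true ht hb.1 hR)
    · exfalso
      have hcs : c.1 ∈ s := (impliesL_var_mem hv hc2).1
      exact hfa c.1 hcs (litVal_none_iff.1 hc1)
  funext v
  cases hv1 : ρ1 v with
  | some b => exact (key ρ1 ρ2 h1 h2 hf1 v b hv1).symm
  | none =>
    cases hv2 : ρ2 v with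
    | none => rfl
    | some b => exact absurd (key ρ2 ρ1 h2 h1 hf2 v b hv2) (by rw [hv1]; simp)

end Acyclic

section Arith

lemma cube_le_three_pow (k : ℕ) : k ^ 3 ≤ 3 ^ k := by
  induction k with
  | zero => norm_num
  | succ n ih =>
    match n, ih with
    | 0, _ => norm_num
    | 1, _ => norm_num
    | 2, _ => norm_num
    | (m+3), ih =>
      have hnl : (m+3+1)^3 + (2*m^3+15*m^2+33*m+17) = 3 * (m+3)^3 := by ring
      calc (m+3+1)^3 ≤ 3 * (m+3)^3 := Nat.le.intro hnl
        _ ≤ 3 * 3 ^ (m+3) := Nat.mul_le_mul_left 3 ih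
        _ = 3 ^ (m+3+1) := by ring

lemma rpow_third_bound {a : ℝ} {k : ℕ} (ha : 0 ≤ a) (h : a ^ (3:ℕ) ≤ (3:ℝ) ^ k) :
    a ≤ (3:ℝ) ^ ((k:ℝ)/3) := by
  have key : ((a ^ (3:ℕ)) : ℝ) ^ (((3:ℕ):ℝ))⁻¹ ≤ ((3:ℝ) ^ k) ^ (((3:ℕ):ℝ))⁻¹ :=
    Real.rpow_le_rpow (by positivity) h (by positivity)
  rw [Real.pow_rpow_inv_natCast ha (by norm_num)] at key
  refine key.trans ?_
  rw [← Real.rpow_natCast 3 k, ← Real.rpow_mul (by norm_num)]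
  have h3 : (k:ℝ) * (((3:ℕ):ℝ))⁻¹ = (k:ℝ)/3 := by push_cast; ring
  rw [h3]

lemma nat_le_rpow3 (k : ℕ) : (k : ℝ) ≤ (3:ℝ) ^ ((k:ℝ)/3) := by
  refine rpow_third_bound (by positivity) ?_
  exact_mod_cast cube_le_three_pow k

lemma two_le_rpow3 : (2 : ℝ) ≤ (3:ℝ) ^ ((2:ℝ)/3) := by
  have := rpow_third_bound (a := 2) (k := 2) (by norm_num) (by norm_num)
  exact_mod_cast this

end Arith

section MoonMoser

set_option linter.unusedSectionVars false
set_option maxHeartbeats 1000000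

variable {V : Type*} [DecidableEq V] [Fintype V]

def IsMIS (adj : V → V → Prop) (s M : Finset V) : Prop :=
  M ⊆ s ∧ (∀ x ∈ M, ∀ y ∈ M, ¬ adj x y) ∧ ∀ v ∈ s, v ∉ M → ∃ u ∈ M, adj u v

lemma ncard_biUnion_le {α β : Type*} [Fintype β] (t : Finset α) (f : α → Set β) :
    (⋃ i ∈ t, f i).ncard ≤ ∑ i ∈ t, (f i).ncard := by
  classical
  induction t using Finset.induction with
  | empty => simp
  | insert _ _ hx ih =>
    rename_i a tt
    rw [Finset.set_biUnion_insert, Finset.sum_insert hx]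
    exact le_trans (Set.ncard_union_le _ _) (by omega)

lemma mis_empty (adj : V → V → Prop) : {M : Finset V | IsMIS adj ∅ M} = {∅} := by
  ext M
  constructor
  · rintro ⟨hsub, -, -⟩
    simpa using Finset.subset_empty.1 hsub
  · rintro rfl
    exact ⟨Finset.empty_subset _, by simp, by simp⟩

lemma moon_moser (adj : V → V → Prop) (hsym : ∀ x y, adj x y → adj y x) :
    ∀ (m : ℕ) (s : Finset V), s.card ≤ m →
      (({M : Finset V | IsMIS adj s M}).ncard : ℝ) ≤ 3 ^ ((s.card : ℝ)/3) := by
  intro m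
  induction m with
  | zero =>
    intro s hs
    rw [Finset.card_eq_zero.1 (Nat.le_zero.1 hs), mis_empty]
    simp
  | succ m IH =>
    intro s hs
    rcases Finset.eq_empty_or_nonempty s with rfl | hne
    · rw [mis_empty]
      simp
    · classical
      set N : V → Finset V := fun u => insert u (s.filter (fun w => adj u w)) with hN
      obtain ⟨v, hvs, hmin⟩ := s.exists_min_image (fun u => (N u).card) hne
      have hNsub : ∀ u ∈ s, N u ⊆ s := by
        intro u hu
        intro w hw
        rcases Finset.mem_insert.1 hw with rfl | hw
        · exact hu
        · exact (Finset.mem_filter.1 hw).1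
      have hNv : ∀ u ∈ N v, u ∈ s := fun u hu => hNsub v hvs hu
      -- each MIS of s meets N v
      have hcover : {M : Finset V | IsMIS adj s M} ⊆
          ⋃ u ∈ N v, {M : Finset V | IsMIS adj s M ∧ u ∈ M} := by
        intro M hM
        by_cases hvM : v ∈ M
        · exact Set.mem_biUnion (Finset.mem_insert_self _ _) ⟨hM, hvM⟩
        · obtain ⟨u, huM, hadj⟩ := hM.2.2 v hvs hvM
          have huN : u ∈ N v := by
            refine Finset.mem_insert_of_mem (Finset.mem_filter.2 ⟨hM.1 huM, hsym u v hadj⟩)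
          exact Set.mem_biUnion huN ⟨hM, huM⟩
      -- each class injects into MIS of s \ N u
      have hclass : ∀ u ∈ N v,
          (({M : Finset V | IsMIS adj s M ∧ u ∈ M}).ncard : ℕ) ≤
            ({M : Finset V | IsMIS adj (s \ N u) M}).ncard := by
        intro u hu
        apply Set.ncard_le_ncard_of_injOn (fun M => M.erase u)
        · rintro M ⟨⟨hsub, hind, hmax⟩, huM⟩
          refine ⟨?_, ?_, ?_⟩
          · intro x hx
            obtain ⟨hxu, hxM⟩ := Finset.mem_erase.1 hx
            refine Finset.mem_sdiff.2 ⟨hsub hxM, ?_⟩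
            intro hxN
            rcases Finset.mem_insert.1 hxN with rfl | hxf
            · exact hxu rfl
            · exact hind u huM x hxM (Finset.mem_filter.1 hxf).2
          · intro x hx y hy
            exact hind x (Finset.mem_erase.1 hx).2 y (Finset.mem_erase.1 hy).2
          · intro w hw hwM
            obtain ⟨hws, hwN⟩ := Finset.mem_sdiff.1 hw
            have hwu : w ≠ u := by
              rintro rfl
              exact hwN (Finset.mem_insert_self _ _)
            have hwnM : w ∉ M := fun h => hwM (Finset.mem_erase.2 ⟨hwu, h⟩)
            obtain ⟨x, hxM, hadj⟩ := hmax w hws hwnM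
            have hxu : x ≠ u := by
              rintro rfl
              exact hwN (Finset.mem_insert_of_mem (Finset.mem_filter.2 ⟨hws, hadj⟩))
            exact ⟨x, Finset.mem_erase.2 ⟨hxu, hxM⟩, hadj⟩
        · rintro M1 ⟨-, h1⟩ M2 ⟨-, h2⟩ heq
          dsimp only at heq
          have h3 : insert u (M1.erase u) = insert u (M2.erase u) := by rw [heq]
          rwa [Finset.insert_erase h1, Finset.insert_erase h2] at h3
      -- assemble
      have hNcard : ∀ u ∈ N v, (N v).card ≤ (N u).card := fun u hu => hmin u (hNv u hu)
      have hcard1 : 1 ≤ (N v).card := Finset.card_pos.2 ⟨v, Finset.mem_insert_self _ _⟩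
      have main : ({M : Finset V | IsMIS adj s M}).ncard ≤
          ∑ u ∈ N v, ({M : Finset V | IsMIS adj (s \ N u) M}).ncard := by
        refine le_trans (Set.ncard_le_ncard hcover (Set.toFinite _)) ?_
        refine le_trans (ncard_biUnion_le _ _) ?_
        exact Finset.sum_le_sum hclass
      have hreal : (({M : Finset V | IsMIS adj s M}).ncard : ℝ) ≤
          ∑ u ∈ N v, (({M : Finset V | IsMIS adj (s \ N u) M}).ncard : ℝ) := by
        exact_mod_cast main
      refine hreal.trans ?_
      have hterm : ∀ u ∈ N v, (({M : Finset V | IsMIS adj (s \ N u) M}).ncard : ℝ) ≤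
          3 ^ (((s.card : ℝ) - (N v).card)/3) := by
        intro u hu
        have hsd : (s \ N u).card = s.card - (N u).card := Finset.card_sdiff_of_subset (hNsub u (hNv u hu))
        have hle : (s \ N u).card ≤ m := by
          have : (s \ N u).card < s.card := by
            refine Finset.card_lt_card ?_
            refine Finset.ssubset_iff_of_subset (Finset.sdiff_subset) |>.2 ?_
            refine ⟨u, hNv u hu, ?_⟩
            simp only [Finset.mem_sdiff, not_and, not_not]
            intro _
            exact Finset.mem_insert_self _ _
          omega
        refine (IH _ hle).trans ?_
        apply Real.rpow_le_rpow_of_exponent_le (by norm_num)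
        have h1 : ((s \ N u).card : ℝ) = (s.card : ℝ) - ((N u).card : ℝ) := by
          rw [hsd, Nat.cast_sub (Finset.card_le_card (hNsub u (hNv u hu)))]
        rw [h1]
        have h2 : ((N v).card : ℝ) ≤ ((N u).card : ℝ) := by exact_mod_cast hNcard u hu
        linarith
      refine (Finset.sum_le_sum hterm).trans ?_
      rw [Finset.sum_const, nsmul_eq_mul]
      -- (N v).card * 3 ^ ((s.card - (N v).card)/3) ≤ 3 ^ (s.card/3)
      have hk := nat_le_rpow3 (N v).card
      have hNs : ((N v).card : ℝ) ≤ (s.card : ℝ) := by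
        exact_mod_cast Finset.card_le_card (hNsub v hvs)
      calc ((N v).card : ℝ) * 3 ^ (((s.card : ℝ) - (N v).card)/3)
          ≤ 3 ^ (((N v).card : ℝ)/3) * 3 ^ (((s.card : ℝ) - (N v).card)/3) := by
            apply mul_le_mul_of_nonneg_right hk (by positivity)
        _ = 3 ^ (((N v).card : ℝ)/3 + ((s.card : ℝ) - (N v).card)/3) := by
            rw [← Real.rpow_add (by norm_num)]
        _ = 3 ^ ((s.card : ℝ)/3) := by ring_nf

end MoonMoser

section AcyclicPartial

set_option linter.unusedSectionVars false
set_option maxHeartbeats 1000000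

variable {V : Type*} [DecidableEq V] [Fintype V]

lemma adjVar_symm (F : CNF2 V) : ∀ x y, adjVar F x y → adjVar F y x := by
  rintro x y ⟨hxy, u, w, hu, hw, h⟩
  exact ⟨hxy.symm, w, u, hw, hu, h.symm⟩

lemma acyclic_partial_bound {F : CNF2 V} {s : Finset V} (ht : tautFree F)
    (hacyc : ∀ u, ¬ impliesL F u u) (hv : varsIn F s) :
    (({ρ : V → Option Bool | primeImplicant2 ρ F ∧ ∃ v, ρ v = none}).ncard : ℝ) ≤
      3 ^ ((s.card : ℝ)/3) := by
  classical
  set s' : Finset V := s.filter (fun v => ¬ ∃ b, ((v,b) : Lit V) ∈ R0set F) with hs'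
  set Φ : (V → Option Bool) → Finset V := fun ρ => s'.filter (fun v => ρ v = none) with hΦ
  have hmaps : ∀ ρ ∈ {ρ : V → Option Bool | primeImplicant2 ρ F ∧ ∃ v, ρ v = none},
      Φ ρ ∈ {M : Finset V | IsMIS (adjVar F) s' M} := by
    rintro ρ ⟨hPI, -⟩
    refine ⟨Finset.filter_subset _ _, ?_, ?_⟩
    · intro x hx y hy
      have hxn : ρ x = none := (Finset.mem_filter.1 hx).2
      have hyn : ρ y = none := (Finset.mem_filter.1 hy).2
      rintro ⟨hxy, u, w, hu, hw, himp | himp⟩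
      · have : litVal ρ w = some true :=
          reach_true ht hPI.1 himp (by rw [litVal_none_iff.2 (by rw [hu]; exact hxn)]; simp)
        rw [litVal_true_iff] at this
        rw [hw, hyn] at this
        simp at this
      · have : litVal ρ u = some true :=
          reach_true ht hPI.1 himp (by rw [litVal_none_iff.2 (by rw [hw]; exact hyn)]; simp)
        rw [litVal_true_iff] at this
        rw [hu, hxn] at this
        simp at this
    · intro v hvs' hvM
      have hvfix : ρ v ≠ none := by
        intro hn
        exact hvM (Finset.mem_filter.2 ⟨hvs', hn⟩)
      obtain ⟨b, hb⟩ := Option.ne_none_iff_exists'.1 hvfix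
      rcases descent ht hacyc hPI (v, b) (litVal_true_iff.2 hb) with hR | ⟨c, hc1, hc2⟩
      · exact absurd ⟨b, hR⟩ (Finset.mem_filter.1 hvs').2
      · have hcx : ρ c.1 = none := litVal_none_iff.1 hc1
        have hcs : c.1 ∈ s := (impliesL_var_mem hv hc2).1
        have hcR : ¬ ∃ b', ((c.1, b') : Lit V) ∈ R0set F := by
          rintro ⟨b', hb'⟩
          have h5 := R0_true ht hPI.1 hb'
          rw [litVal_true_iff] at h5
          simp only at h5
          rw [hcx] at h5
          simp at h5
        have hcs' : c.1 ∈ s' := Finset.mem_filter.2 ⟨hcs, hcR⟩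
        refine ⟨c.1, Finset.mem_filter.2 ⟨hcs', hcx⟩, ?_, c, (v, b), rfl, rfl, Or.inl hc2⟩
        intro he
        rw [he, hb] at hcx
        simp at hcx
  have hinj : Set.InjOn Φ {ρ : V → Option Bool | primeImplicant2 ρ F ∧ ∃ v, ρ v = none} := by
    rintro ρ1 ⟨h1, -⟩ ρ2 ⟨h2, -⟩ heq
    -- free sets agree
    have hfreq : ∀ v, ρ1 v = none ↔ ρ2 v = none := by
      intro v
      by_cases hvs : v ∈ s
      · by_cases hR : ∃ b, ((v, b) : Lit V) ∈ R0set F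
        · obtain ⟨b, hb⟩ := hR
          have e1 := litVal_true_iff.1 (R0_true ht h1.1 hb)
          have e2 := litVal_true_iff.1 (R0_true ht h2.1 hb)
          constructor
          · intro hh; rw [hh] at e1; simp at e1
          · intro hh; rw [hh] at e2; simp at e2
        · have hvs' : v ∈ s' := Finset.mem_filter.2 ⟨hvs, hR⟩
          constructor
          · intro hh
            have : v ∈ Φ ρ1 := Finset.mem_filter.2 ⟨hvs', hh⟩
            rw [heq] at this
            exact (Finset.mem_filter.1 this).2
          · intro hh
            have : v ∈ Φ ρ2 := Finset.mem_filter.2 ⟨hvs', hh⟩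
            rw [← heq] at this
            exact (Finset.mem_filter.1 this).2
      · rw [not_fixed_of_not_mem ht hv h1 hvs, not_fixed_of_not_mem ht hv h2 hvs]
    have hval : ∀ (ρa ρb : V → Option Bool), primeImplicant2 ρa F → primeImplicant2 ρb F →
        (∀ v, ρa v = none ↔ ρb v = none) → ∀ v b, ρa v = some b → ρb v = some b := by
      intro ρa ρb ha hb hfr v b hab
      rcases descent ht hacyc ha (v, b) (litVal_true_iff.2 hab) with hR | ⟨c, hc1, hc2⟩
      · exact litVal_true_iff.1 (R0_true ht hb.1 hR)
      · have : litVal ρb c = none := by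
          rw [litVal_none_iff] at hc1 ⊢
          exact (hfr c.1).1 hc1
        have := reach_true ht hb.1 hc2 (by rw [this]; simp)
        exact litVal_true_iff.1 this
    funext v
    cases h1v : ρ1 v with
    | none => rw [(hfreq v).1 h1v]
    | some b => exact (hval ρ1 ρ2 h1 h2 hfreq v b h1v).symm
  have hcount := Set.ncard_le_ncard_of_injOn Φ hmaps hinj (Set.toFinite _)
  have hMM := moon_moser (adjVar F) (adjVar_symm F) s'.card s' le_rfl
  have : (({ρ : V → Option Bool | primeImplicant2 ρ F ∧ ∃ v, ρ v = none}).ncard : ℝ) ≤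
      (({M : Finset V | IsMIS (adjVar F) s' M}).ncard : ℝ) := by exact_mod_cast hcount
  refine this.trans (hMM.trans ?_)
  apply Real.rpow_le_rpow_of_exponent_le (by norm_num)
  have : s'.card ≤ s.card := Finset.card_le_card (Finset.filter_subset _ _)
  have h3 : (s'.card : ℝ) ≤ (s.card : ℝ) := by exact_mod_cast this
  linarith

end AcyclicPartial

section Branch

set_option linter.unusedSectionVars false
set_option maxHeartbeats 1000000

open scoped Classical

variable {V : Type*} [DecidableEq V] [Fintype V]

/-- The strongly connected component of `u0`. -/
def sccX (F : CNF2 V) (u0 : Lit V) : Set (Lit V) :=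
  {w | w = u0 ∨ (impliesL F u0 w ∧ impliesL F w u0)}

def sccW (F : CNF2 V) (u0 : Lit V) : Set V := {v | ∃ b, ((v, b) : Lit V) ∈ sccX F u0}

noncomputable def piB (F : CNF2 V) (u0 : Lit V) (b : Bool) : V → Option Bool := fun v =>
  if ((v, true) : Lit V) ∈ sccX F u0 then some b
  else if ((v, false) : Lit V) ∈ sccX F u0 then some (!b) else none

noncomputable def resF (F : CNF2 V) (u0 : Lit V) (b : Bool) : CNF2 V :=
  F.filterMap (fun c =>
    if litVal (piB F u0 b) c.1 = some true ∨ litVal (piB F u0 b) c.2 = some true then none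
    else if c.1.1 ∈ sccW F u0 ∧ c.2.1 ∈ sccW F u0 then none
    else if c.1.1 ∈ sccW F u0 then some (c.2, c.2)
    else if c.2.1 ∈ sccW F u0 then some (c.1, c.1)
    else some c)

noncomputable def restrictW (W : Set V) (ρ : V → Option Bool) : V → Option Bool :=
  fun v => if v ∈ W then none else ρ v

variable {F : CNF2 V} {u0 : Lit V}

lemma mem_sccX_self (hcyc : impliesL F u0 u0) : u0 ∈ sccX F u0 := Or.inl rfl

lemma sccX_mutual {w : Lit V} (hw : w ∈ sccX F u0) (hne : w ≠ u0) :
    impliesL F u0 w ∧ impliesL F w u0 := by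
  rcases hw with rfl | h
  · exact absurd rfl hne
  · exact h

lemma sccX_reach (hcyc : impliesL F u0 u0) {w : Lit V} (hw : w ∈ sccX F u0) :
    impliesL F u0 w ∧ impliesL F w u0 := by
  rcases hw with rfl | h
  · exact ⟨hcyc, hcyc⟩
  · exact h

lemma sccX_confl (hcyc : impliesL F u0 u0)
    (hgood : ¬ ∃ l : Lit V, impliesL F l (negLit l) ∧ impliesL F (negLit l) l)
    {v : V} : ¬ (((v, true) : Lit V) ∈ sccX F u0 ∧ ((v, false) : Lit V) ∈ sccX F u0) := by
  rintro ⟨h1, h2⟩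
  apply hgood
  refine ⟨(v, true), ?_, ?_⟩
  · have ha := sccX_reach hcyc h1
    have hb := sccX_reach hcyc h2
    have : impliesL F (v, true) (v, false) := ha.2.trans hb.1
    simpa [negLit] using this
  · have ha := sccX_reach hcyc h1
    have hb := sccX_reach hcyc h2
    have : impliesL F (v, false) (v, true) := hb.2.trans ha.1
    simpa [negLit] using this

lemma piB_some {b : Bool} {v : V} (hv : v ∈ sccW F u0) : piB F u0 b v ≠ none := by
  obtain ⟨b', hb'⟩ := hv
  unfold piB
  cases b' with
  | true => simp [hb']
  | false =>
    by_cases h : ((v, true) : Lit V) ∈ sccX F u0 <;> simp [h, hb']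

lemma piB_some_var {b : Bool} {v : V} {c : Bool} (h : piB F u0 b v = some c) : v ∈ sccW F u0 := by
  unfold piB at h
  split_ifs at h with h1 h2
  · exact ⟨true, h1⟩
  · exact ⟨false, h2⟩

/-- Agreement on the SCC: a prime implicant assigns `sccW` according to `piB true`
or according to `piB false`. -/
lemma pattern_dichotomy (ht : tautFree F) (hcyc : impliesL F u0 u0)
    (hgood : ¬ ∃ l : Lit V, impliesL F l (negLit l) ∧ impliesL F (negLit l) l)
    {ρ : V → Option Bool} (h : implicant2 ρ F) :
    (∀ v ∈ sccW F u0, ρ v = piB F u0 true v) ∨ (∀ v ∈ sccW F u0, ρ v = piB F u0 false v) := by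
  have key : ∀ bb : Bool, (∀ w ∈ sccX F u0, litVal ρ w = some bb) →
      ∀ v ∈ sccW F u0, ρ v = piB F u0 bb v := by
    intro bb hX v hvW
    obtain ⟨b', hb'⟩ := hvW
    have hlv := hX _ hb'
    cases b' with
    | true =>
      have hval : ρ v = some bb := by
        cases bb with
        | true => exact litVal_true_iff.1 hlv
        | false => simpa using litVal_false_iff.1 hlv
      rw [hval]
      unfold piB
      rw [if_pos hb']
    | false =>
      have hnt : ((v, true) : Lit V) ∉ sccX F u0 := fun hh => sccX_confl hcyc hgood ⟨hh, hb'⟩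
      have hval : ρ v = some (!bb) := by
        cases bb with
        | true => simpa using litVal_true_iff.1 hlv
        | false => simpa using litVal_false_iff.1 hlv
      rw [hval]
      unfold piB
      rw [if_neg hnt, if_pos hb']
  cases hval : litVal ρ u0 with
  | none =>
    exfalso
    have := reach_true ht h hcyc (by rw [hval]; simp)
    rw [hval] at this
    simp at this
  | some bv =>
    cases bv with
    | true =>
      left
      apply key
      intro w hw
      rcases hw with rfl | hmut
      · exact hval
      · exact reach_true ht h hmut.1 (by rw [hval]; simp)
    | false =>
      right
      apply key
      intro w hw
      rcases hw with rfl | hmut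
      · exact hval
      · have hneg : litVal ρ (negLit u0) = some true := litVal_negLit_true_iff.2 hval
        have := reach_true ht h (impliesL_neg hmut.2) (by rw [hneg]; simp)
        rw [litVal_negLit_true_iff] at this
        exact this

lemma resF_tautFree (ht : tautFree F) {b : Bool} : tautFree (resF F u0 b) := by
  intro c' hc'
  obtain ⟨c, hcF, hg⟩ := List.mem_filterMap.1 hc'
  split_ifs at hg with h1 h2 h3 h4
  · injection hg with hg'
    rw [← hg']
    exact fun hh => self_ne_negLit c.2 (by rw [← hh])
  · injection hg with hg'
    rw [← hg']
    exact fun hh => self_ne_negLit c.1 (by rw [← hh])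
  · injection hg with hg'
    rw [← hg']
    exact ht c hcF

lemma resF_varsIn {s : Finset V} (hv : varsIn F s) {b : Bool} {Wf : Finset V}
    (hWf : ∀ v : V, v ∈ Wf ↔ v ∈ sccW F u0) :
    varsIn (resF F u0 b) (s \ Wf) := by
  intro c' hc'
  obtain ⟨c, hcF, hg⟩ := List.mem_filterMap.1 hc'
  split_ifs at hg with h1 h2 h3 h4
  · injection hg with hg'
    rw [← hg']
    have h2' : c.2.1 ∉ sccW F u0 := fun hh => h2 ⟨h3, hh⟩
    exact ⟨Finset.mem_sdiff.2 ⟨(hv c hcF).2, fun hh => h2' ((hWf _).1 hh)⟩,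
           Finset.mem_sdiff.2 ⟨(hv c hcF).2, fun hh => h2' ((hWf _).1 hh)⟩⟩
  · injection hg with hg'
    rw [← hg']
    exact ⟨Finset.mem_sdiff.2 ⟨(hv c hcF).1, fun hh => h3 ((hWf _).1 hh)⟩,
           Finset.mem_sdiff.2 ⟨(hv c hcF).1, fun hh => h3 ((hWf _).1 hh)⟩⟩
  · injection hg with hg'
    rw [← hg']
    exact ⟨Finset.mem_sdiff.2 ⟨(hv c hcF).1, fun hh => h3 ((hWf _).1 hh)⟩,
           Finset.mem_sdiff.2 ⟨(hv c hcF).2, fun hh => h4 ((hWf _).1 hh)⟩⟩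

/-- The restriction of a prime implicant in class `b` is a prime implicant of the
residual formula. -/
lemma restrict_prime (ht : tautFree F) {b : Bool} {ρ : V → Option Bool}
    (hPI : primeImplicant2 ρ F) (hag : ∀ v ∈ sccW F u0, ρ v = piB F u0 b v) :
    primeImplicant2 (restrictW (sccW F u0) ρ) (resF F u0 b) := by
  have hlit : ∀ l : Lit V, l.1 ∈ sccW F u0 → litVal ρ l = litVal (piB F u0 b) l := by
    intro l hl
    unfold litVal
    rw [hag l.1 hl]
  constructor
  · -- implicant
    intro α hα c' hc'
    obtain ⟨c, hcF, hg⟩ := List.mem_filterMap.1 hc'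
    set α' : V → Bool := fun v => if v ∈ sccW F u0 then (piB F u0 b v).getD true else α v with hα'
    have hα'ext : extendsR α' ρ := by
      intro v bv hbv
      by_cases hvW : v ∈ sccW F u0
      · have : piB F u0 b v = some bv := by rw [← hag v hvW]; exact hbv
        simp [hα', hvW, this]
      · have : restrictW (sccW F u0) ρ v = some bv := by
          unfold restrictW
          simp [hvW, hbv]
        simp only [hα', if_neg hvW]
        exact hα _ _ this
    have hsat := hPI.1 α' hα'ext c hcF
    -- the satisfied literal is outside W
    have houtW : ∀ l : Lit V, evalLit α' l = true → l.1 ∉ sccW F u0 ∨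
        litVal (piB F u0 b) l = some true := by
      intro l hev
      by_cases hlW : l.1 ∈ sccW F u0
      · right
        have hps : piB F u0 b l.1 ≠ none := piB_some hlW
        obtain ⟨pv, hpv⟩ := Option.ne_none_iff_exists'.1 hps
        have : α' l.1 = pv := by simp [hα', hlW, hpv]
        unfold evalLit at hev
        rw [this] at hev
        unfold litVal
        rw [hpv]
        simpa using hev
      · exact Or.inl hlW
    split_ifs at hg with h1 h2 h3 h4
    · -- c' = (c.2, c.2), c.1.1 ∈ W
      injection hg with hg'
      rcases hsat with hev | hev
      · rcases houtW _ hev with hout | htrue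
        · exact absurd h3 hout
        · exact absurd (Or.inl htrue) h1
      · rcases houtW _ hev with hout | htrue
        · left
          rw [← hg']
          have : evalLit α c.2 = evalLit α' c.2 := by
            unfold evalLit
            simp [hα', hout]
          rw [this]; exact hev
        · exact absurd (Or.inr htrue) h1
    · -- c' = (c.1, c.1), c.2.1 ∈ W
      injection hg with hg'
      rcases hsat with hev | hev
      · rcases houtW _ hev with hout | htrue
        · left
          rw [← hg']
          have : evalLit α c.1 = evalLit α' c.1 := by
            unfold evalLit
            simp [hα', hout]
          rw [this]; exact hev
        · exact absurd (Or.inl htrue) h1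
      · rcases houtW _ hev with hout | htrue
        · exact absurd h4 hout
        · exact absurd (Or.inr htrue) h1
    · -- c' = c, both outside W
      injection hg with hg'
      rw [← hg']
      rcases hsat with hev | hev
      · rcases houtW _ hev with hout | htrue
        · left
          have : evalLit α c.1 = evalLit α' c.1 := by
            unfold evalLit
            simp [hα', hout]
          rw [this]; exact hev
        · exact absurd (Or.inl htrue) h1
      · rcases houtW _ hev with hout | htrue
        · right
          have : evalLit α c.2 = evalLit α' c.2 := by
            unfold evalLit
            simp [hα', hout]
          rw [this]; exact hev
        · exact absurd (Or.inr htrue) h1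
  · -- primality
    intro v hvfix
    have hvW : v ∉ sccW F u0 := by
      intro hh
      apply hvfix
      unfold restrictW
      simp [hh]
    have hρv : ρ v ≠ none := by
      intro hh
      apply hvfix
      unfold restrictW
      simp [hvW, hh]
    have hni := hPI.2 v hρv
    intro hcontra
    apply hni
    intro α hα c hcF
    have hα2 : extendsR α (unfix (restrictW (sccW F u0) ρ) v) := by
      intro w bw hw
      by_cases hwv : w = v
      · subst hwv
        unfold unfix at hw
        rw [Function.update_self] at hw
        exact absurd hw (by simp)
      · unfold unfix restrictW at hw
        rw [Function.update_of_ne hwv] at hw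
        by_cases hwW : w ∈ sccW F u0
        · rw [if_pos hwW] at hw
          exact absurd hw (by simp)
        · rw [if_neg hwW] at hw
          apply hα w bw
          unfold unfix
          rw [Function.update_of_ne hwv]
          exact hw
    -- α agrees with piB on W
    have hαW : ∀ w ∈ sccW F u0, ∀ bw, piB F u0 b w = some bw → α w = bw := by
      intro w hwW bw hbw
      have hwv : w ≠ v := fun hh => hvW (hh ▸ hwW)
      apply hα w bw
      unfold unfix
      rw [Function.update_of_ne hwv]
      rw [hag w hwW]
      exact hbw
    -- show c is satisfied by α
    by_contra hcsat
    rw [not_or] at hcsat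
    obtain ⟨hs1, hs2⟩ := hcsat
    have hs1' : evalLit α c.1 = false := by
      cases h : evalLit α c.1
      · rfl
      · exact absurd h hs1
    have hs2' : evalLit α c.2 = false := by
      cases h : evalLit α c.2
      · rfl
      · exact absurd h hs2
    -- any literal of c with variable in W is false under piB
    have hWfalse : ∀ l : Lit V, l.1 ∈ sccW F u0 → evalLit α l = false →
        litVal (piB F u0 b) l = some false := by
      intro l hlW hev
      have hps : piB F u0 b l.1 ≠ none := piB_some hlW
      obtain ⟨pv, hpv⟩ := Option.ne_none_iff_exists'.1 hps
      have hαl : α l.1 = pv := hαW l.1 hlW pv hpv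
      unfold evalLit at hev
      rw [hαl] at hev
      unfold litVal
      rw [hpv]
      simpa using hev
    -- c survives into resF and is violated there
    have hnt : ¬ (litVal (piB F u0 b) c.1 = some true ∨ litVal (piB F u0 b) c.2 = some true) := by
      rintro (hh | hh)
      · have h1W := piB_some_var (litVal_true_iff.1 hh)
        have := hWfalse c.1 h1W hs1'
        rw [hh] at this
        simp at this
      · have h2W := piB_some_var (litVal_true_iff.1 hh)
        have := hWfalse c.2 h2W hs2'
        rw [hh] at this
        simp at this
    have hnboth : ¬ (c.1.1 ∈ sccW F u0 ∧ c.2.1 ∈ sccW F u0) := by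
      rintro ⟨hw1, hw2⟩
      -- then c is uncovered by ρ: contradiction with implicant
      have hcov := (implicant_iff ht).1 hPI.1 c hcF
      rcases hcov with hh | hh
      · rw [hlit c.1 hw1] at hh
        have := hWfalse c.1 hw1 hs1'
        rw [hh] at this; simp at this
      · rw [hlit c.2 hw2] at hh
        have := hWfalse c.2 hw2 hs2'
        rw [hh] at this; simp at this
    -- produce the violated residual clause
    by_cases hw1 : c.1.1 ∈ sccW F u0
    · have hw2 : c.2.1 ∉ sccW F u0 := fun hh => hnboth ⟨hw1, hh⟩
      have hmem : (c.2, c.2) ∈ resF F u0 b := by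
        refine List.mem_filterMap.2 ⟨c, hcF, ?_⟩
        rw [if_neg hnt, if_neg hnboth, if_pos hw1]
      have := hcontra α hα2 (c.2, c.2) hmem
      rcases this with hh | hh <;> (rw [hs2'] at hh; simp at hh)
    · by_cases hw2 : c.2.1 ∈ sccW F u0
      · have hmem : (c.1, c.1) ∈ resF F u0 b := by
          refine List.mem_filterMap.2 ⟨c, hcF, ?_⟩
          rw [if_neg hnt, if_neg hnboth, if_neg hw1, if_pos hw2]
        have := hcontra α hα2 (c.1, c.1) hmem
        rcases this with hh | hh <;> (rw [hs1'] at hh; simp at hh)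
      · have hmem : c ∈ resF F u0 b := by
          refine List.mem_filterMap.2 ⟨c, hcF, ?_⟩
          rw [if_neg hnt, if_neg hnboth, if_neg hw1, if_neg hw2]
        have := hcontra α hα2 c hmem
        rcases this with hh | hh
        · rw [hs1'] at hh; simp at hh
        · rw [hs2'] at hh; simp at hh

lemma restrict_inj {b : Bool} {ρ1 ρ2 : V → Option Bool}
    (hag1 : ∀ v ∈ sccW F u0, ρ1 v = piB F u0 b v)
    (hag2 : ∀ v ∈ sccW F u0, ρ2 v = piB F u0 b v)
    (heq : restrictW (sccW F u0) ρ1 = restrictW (sccW F u0) ρ2) : ρ1 = ρ2 := by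
  funext v
  by_cases hvW : v ∈ sccW F u0
  · rw [hag1 v hvW, hag2 v hvW]
  · have := congrFun heq v
    unfold restrictW at this
    simpa [hvW] using this

end Branch

section Master

set_option linter.unusedSectionVars false
set_option maxHeartbeats 1000000

open scoped Classical

variable {V : Type*} [DecidableEq V] [Fintype V]

lemma ncard_le_one_of_subsingleton {α : Type*} {s : Set α} (h : s.Subsingleton) :
    s.ncard ≤ 1 := by
  rcases Set.eq_empty_or_nonempty s with rfl | ⟨a, ha⟩
  · simp
  · have hs : s = {a} := Set.eq_singleton_iff_nonempty_unique_mem.2 ⟨⟨a, ha⟩, fun b hb => h hb ha⟩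
    rw [hs, Set.ncard_singleton]

lemma no_self_edge {F : CNF2 V} (ht : tautFree F) (u : Lit V) : ¬ edge F u u := by
  rintro ⟨c, hc, ⟨h1, h2⟩ | ⟨h1, h2⟩⟩
  · apply ht c hc
    rw [← h2, h1, negLit_negLit]
  · apply ht c hc
    rw [← h2, h1]

lemma sccW_mem_s {F : CNF2 V} {u0 : Lit V} {s : Finset V} (hv : varsIn F s)
    (hcyc : impliesL F u0 u0) : ∀ v ∈ sccW F u0, v ∈ s := by
  rintro v ⟨b', hb'⟩
  have := (sccX_reach hcyc hb').1
  exact (impliesL_var_mem hv this).2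

lemma sccW_two {F : CNF2 V} {u0 : Lit V} (ht : tautFree F) (hcyc : impliesL F u0 u0)
    (hgood : ¬ ∃ l : Lit V, impliesL F l (negLit l) ∧ impliesL F (negLit l) l) :
    ∃ x y : V, x ≠ y ∧ x ∈ sccW F u0 ∧ y ∈ sccW F u0 := by
  obtain ⟨w0, he, hrt⟩ := (Relation.TransGen.head'_iff).1 hcyc
  have hw0ne : w0 ≠ u0 := by
    rintro rfl
    exact no_self_edge ht w0 he
  have himp : impliesL F w0 u0 := by
    rcases Relation.ReflTransGen.cases_head hrt with rfl | ⟨c, hc1, hc2⟩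
    · exact absurd rfl hw0ne
    · exact Relation.TransGen.head' hc1 hc2
  have hw0X : w0 ∈ sccX F u0 := Or.inr ⟨Relation.TransGen.single he, himp⟩
  have hu0X : u0 ∈ sccX F u0 := Or.inl rfl
  refine ⟨u0.1, w0.1, ?_, ⟨u0.2, by rwa [Prod.mk.eta]⟩, ⟨w0.2, by rwa [Prod.mk.eta]⟩⟩
  intro hfst
  have : w0 = negLit u0 := by
    have : w0.2 = !u0.2 := by
      by_contra hsnd
      apply hw0ne
      refine Prod.ext hfst.symm ?_
      cases h1 : w0.2 <;> cases h2 : u0.2 <;> simp_all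
    exact Prod.ext hfst.symm this
  subst this
  exact hgood ⟨u0, Relation.TransGen.single he, himp⟩

lemma bad_empty {F : CNF2 V} (ht : tautFree F)
    (hbad : ∃ l : Lit V, impliesL F l (negLit l) ∧ impliesL F (negLit l) l)
    {ρ : V → Option Bool} (h : primeImplicant2 ρ F) : False := by
  obtain ⟨l, h1, h2⟩ := hbad
  exact bad_no_PI ht h1 h2 h.1

lemma acyclic_full_bound {F : CNF2 V} {s : Finset V} (ht : tautFree F)
    (hacyc : ∀ u, ¬ impliesL F u u) (hv : varsIn F s) :
    (({ρ : V → Option Bool | primeImplicant2 ρ F ∧ ∀ v ∈ s, ρ v ≠ none}).ncard : ℝ) ≤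
      2 ^ ((s.card : ℝ)/2) := by
  have h1 := ncard_le_one_of_subsingleton (acyclic_full_subsingleton ht hacyc hv)
  have h2 : (({ρ : V → Option Bool | primeImplicant2 ρ F ∧ ∀ v ∈ s, ρ v ≠ none}).ncard : ℝ) ≤ 1 := by
    exact_mod_cast h1
  refine h2.trans ?_
  apply Real.one_le_rpow (by norm_num)
  positivity

lemma master (m : ℕ) : ∀ (s : Finset V) (F : CNF2 V), s.card ≤ m → tautFree F → varsIn F s →
    (({ρ : V → Option Bool | primeImplicant2 ρ F ∧ ∃ v, ρ v = none}).ncard : ℝ) ≤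
        3 ^ ((s.card : ℝ)/3) ∧
    (({ρ : V → Option Bool | primeImplicant2 ρ F ∧ ∀ v ∈ s, ρ v ≠ none}).ncard : ℝ) ≤
        2 ^ ((s.card : ℝ)/2) := by
  induction m with
  | zero =>
    intro s F hs ht hv
    have hacyc : ∀ u, ¬ impliesL F u u := by
      intro u hu
      have h1 : u.1 ∈ s := (impliesL_var_mem hv hu).1
      have : 0 < s.card := Finset.card_pos.2 ⟨u.1, h1⟩
      omega
    exact ⟨acyclic_partial_bound ht hacyc hv, acyclic_full_bound ht hacyc hv⟩
  | succ m IH =>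
    intro s F hs ht hv
    by_cases hbad : ∃ l : Lit V, impliesL F l (negLit l) ∧ impliesL F (negLit l) l
    · constructor
      · have he : {ρ : V → Option Bool | primeImplicant2 ρ F ∧ ∃ v, ρ v = none} = ∅ := by
          ext ρ
          simp only [Set.mem_setOf_eq, Set.mem_empty_iff_false, iff_false]
          rintro ⟨h, -⟩
          exact bad_empty ht hbad h
        rw [he, Set.ncard_empty]
        simp only [Nat.cast_zero]
        positivity
      · have he : {ρ : V → Option Bool | primeImplicant2 ρ F ∧ ∀ v ∈ s, ρ v ≠ none} = ∅ := by
          ext ρ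
          simp only [Set.mem_setOf_eq, Set.mem_empty_iff_false, iff_false]
          rintro ⟨h, -⟩
          exact bad_empty ht hbad h
        rw [he, Set.ncard_empty]
        simp only [Nat.cast_zero]
        positivity
    · by_cases hcyc : ∃ u, impliesL F u u
      · obtain ⟨u0, hu0⟩ := hcyc
        set Wf : Finset V := Finset.univ.filter (fun v => v ∈ sccW F u0) with hWfdef
        have hWf : ∀ v : V, v ∈ Wf ↔ v ∈ sccW F u0 := by
          intro v
          simp [hWfdef]
        have hWsub : Wf ⊆ s := fun v hvW => sccW_mem_s hv hu0 v ((hWf v).1 hvW)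
        have hW2 : 2 ≤ Wf.card := by
          obtain ⟨x, y, hxy, hx, hy⟩ := sccW_two ht hu0 hbad
          exact Finset.one_lt_card.2 ⟨x, (hWf x).2 hx, y, (hWf y).2 hy, hxy⟩
        have hcards : (s \ Wf).card = s.card - Wf.card := Finset.card_sdiff_of_subset hWsub
        have hcardm : (s \ Wf).card ≤ m := by
          have := Finset.card_le_card hWsub
          omega
        have hcardR : ((s \ Wf).card : ℝ) = (s.card : ℝ) - (Wf.card : ℝ) := by
          rw [hcards, Nat.cast_sub (Finset.card_le_card hWsub)]
        -- the two residual bounds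
        have hIHt := IH (s \ Wf) (resF F u0 true) hcardm (resF_tautFree ht)
          (resF_varsIn hv hWf)
        have hIHf := IH (s \ Wf) (resF F u0 false) hcardm (resF_tautFree ht)
          (resF_varsIn hv hWf)
        -- class decomposition
        have hsplit : ∀ (P : (V → Option Bool) → Prop),
            {ρ : V → Option Bool | primeImplicant2 ρ F ∧ P ρ} ⊆
              {ρ : V → Option Bool | (primeImplicant2 ρ F ∧ P ρ) ∧
                  ∀ v ∈ sccW F u0, ρ v = piB F u0 true v} ∪
              {ρ : V → Option Bool | (primeImplicant2 ρ F ∧ P ρ) ∧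
                  ∀ v ∈ sccW F u0, ρ v = piB F u0 false v} := by
          intro P ρ hρ
          rcases pattern_dichotomy ht hu0 hbad hρ.1.1 with hp | hp
          · exact Or.inl ⟨hρ, hp⟩
          · exact Or.inr ⟨hρ, hp⟩
        constructor
        · -- partial
          have hmapb : ∀ b : Bool,
              (({ρ : V → Option Bool | (primeImplicant2 ρ F ∧ ∃ v, ρ v = none) ∧
                  ∀ v ∈ sccW F u0, ρ v = piB F u0 b v}).ncard : ℝ) ≤
                3 ^ (((s \ Wf).card : ℝ)/3) := by
            intro b
            have hle : ({ρ : V → Option Bool | (primeImplicant2 ρ F ∧ ∃ v, ρ v = none) ∧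
                ∀ v ∈ sccW F u0, ρ v = piB F u0 b v}).ncard ≤
                ({ρ : V → Option Bool | primeImplicant2 (ρ) (resF F u0 b) ∧
                  ∃ v, ρ v = none}).ncard := by
              apply Set.ncard_le_ncard_of_injOn (restrictW (sccW F u0))
              · rintro ρ ⟨⟨hPI, v, hvn⟩, hag⟩
                refine ⟨restrict_prime ht hPI hag, v, ?_⟩
                unfold restrictW
                by_cases hvW : v ∈ sccW F u0
                · exact absurd (by rw [hag v hvW] at hvn; exact hvn) (piB_some hvW)
                · simp [hvW, hvn]
              · rintro ρ1 ⟨⟨-, -⟩, hag1⟩ ρ2 ⟨⟨-, -⟩, hag2⟩ heq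
                exact restrict_inj hag1 hag2 heq
            calc (({ρ : V → Option Bool | (primeImplicant2 ρ F ∧ ∃ v, ρ v = none) ∧
                ∀ v ∈ sccW F u0, ρ v = piB F u0 b v}).ncard : ℝ)
                ≤ (({ρ : V → Option Bool | primeImplicant2 (ρ) (resF F u0 b) ∧
                  ∃ v, ρ v = none}).ncard : ℝ) := by exact_mod_cast hle
              _ ≤ 3 ^ (((s \ Wf).card : ℝ)/3) := by
                  cases b
                  · exact hIHf.1
                  · exact hIHt.1
          have hunion := hsplit (fun ρ => ∃ v, ρ v = none)
          have hn1 : (({ρ : V → Option Bool | primeImplicant2 ρ F ∧ ∃ v, ρ v = none}).ncard : ℝ) ≤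
              3 ^ (((s \ Wf).card : ℝ)/3) + 3 ^ (((s \ Wf).card : ℝ)/3) := by
            have h1 := Set.ncard_le_ncard hunion (Set.toFinite _)
            have h2 := Set.ncard_union_le
              {ρ : V → Option Bool | (primeImplicant2 ρ F ∧ ∃ v, ρ v = none) ∧
                  ∀ v ∈ sccW F u0, ρ v = piB F u0 true v}
              {ρ : V → Option Bool | (primeImplicant2 ρ F ∧ ∃ v, ρ v = none) ∧
                  ∀ v ∈ sccW F u0, ρ v = piB F u0 false v}
            have h3 : (({ρ : V → Option Bool | primeImplicant2 ρ F ∧ ∃ v, ρ v = none}).ncard : ℝ) ≤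
                (({ρ : V → Option Bool | (primeImplicant2 ρ F ∧ ∃ v, ρ v = none) ∧
                  ∀ v ∈ sccW F u0, ρ v = piB F u0 true v}).ncard : ℝ) +
                (({ρ : V → Option Bool | (primeImplicant2 ρ F ∧ ∃ v, ρ v = none) ∧
                  ∀ v ∈ sccW F u0, ρ v = piB F u0 false v}).ncard : ℝ) := by
              exact_mod_cast le_trans h1 h2
            exact h3.trans (add_le_add (hmapb true) (hmapb false))
          refine hn1.trans ?_
          rw [hcardR]
          have hWr : (2 : ℝ) ≤ (Wf.card : ℝ) := by exact_mod_cast hW2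
          have hstep1 : (3:ℝ) ^ (((s.card : ℝ) - (Wf.card : ℝ))/3) ≤
              3 ^ (((s.card : ℝ) - 2)/3) := by
            apply Real.rpow_le_rpow_of_exponent_le (by norm_num)
            linarith
          have : (3:ℝ) ^ (((s.card : ℝ) - (Wf.card:ℝ))/3) + 3 ^ (((s.card : ℝ) - (Wf.card:ℝ))/3) =
              2 * 3 ^ (((s.card : ℝ) - (Wf.card:ℝ))/3) := by ring
          rw [this]
          calc 2 * (3:ℝ) ^ (((s.card : ℝ) - (Wf.card:ℝ))/3)
              ≤ 2 * 3 ^ (((s.card : ℝ) - 2)/3) := by linarith [hstep1]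
            _ ≤ 3 ^ ((2:ℝ)/3) * 3 ^ (((s.card : ℝ) - 2)/3) := by
                have := two_le_rpow3
                have hpos : (0:ℝ) ≤ 3 ^ (((s.card : ℝ) - 2)/3) := by positivity
                nlinarith
            _ = 3 ^ ((s.card : ℝ)/3) := by
                rw [← Real.rpow_add (by norm_num)]
                congr 1
                ring
        · -- full
          have hmapb : ∀ b : Bool,
              (({ρ : V → Option Bool | (primeImplicant2 ρ F ∧ ∀ v ∈ s, ρ v ≠ none) ∧
                  ∀ v ∈ sccW F u0, ρ v = piB F u0 b v}).ncard : ℝ) ≤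
                2 ^ (((s \ Wf).card : ℝ)/2) := by
            intro b
            have hle : ({ρ : V → Option Bool | (primeImplicant2 ρ F ∧ ∀ v ∈ s, ρ v ≠ none) ∧
                ∀ v ∈ sccW F u0, ρ v = piB F u0 b v}).ncard ≤
                ({ρ : V → Option Bool | primeImplicant2 (ρ) (resF F u0 b) ∧
                  ∀ v ∈ (s \ Wf), ρ v ≠ none}).ncard := by
              apply Set.ncard_le_ncard_of_injOn (restrictW (sccW F u0))
              · rintro ρ ⟨⟨hPI, hfull⟩, hag⟩
                refine ⟨restrict_prime ht hPI hag, ?_⟩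
                intro v hvs
                obtain ⟨hvs', hvW⟩ := Finset.mem_sdiff.1 hvs
                have hvW' : v ∉ sccW F u0 := fun hh => hvW ((hWf v).2 hh)
                unfold restrictW
                rw [if_neg hvW']
                exact hfull v hvs'
              · rintro ρ1 ⟨⟨-, -⟩, hag1⟩ ρ2 ⟨⟨-, -⟩, hag2⟩ heq
                exact restrict_inj hag1 hag2 heq
            calc (({ρ : V → Option Bool | (primeImplicant2 ρ F ∧ ∀ v ∈ s, ρ v ≠ none) ∧
                ∀ v ∈ sccW F u0, ρ v = piB F u0 b v}).ncard : ℝ)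
                ≤ (({ρ : V → Option Bool | primeImplicant2 (ρ) (resF F u0 b) ∧
                  ∀ v ∈ (s \ Wf), ρ v ≠ none}).ncard : ℝ) := by exact_mod_cast hle
              _ ≤ 2 ^ (((s \ Wf).card : ℝ)/2) := by
                  cases b
                  · exact hIHf.2
                  · exact hIHt.2
          have hunion := hsplit (fun ρ => ∀ v ∈ s, ρ v ≠ none)
          have hn1 : (({ρ : V → Option Bool | primeImplicant2 ρ F ∧ ∀ v ∈ s, ρ v ≠ none}).ncard : ℝ) ≤
              2 ^ (((s \ Wf).card : ℝ)/2) + 2 ^ (((s \ Wf).card : ℝ)/2) := by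
            have h1 := Set.ncard_le_ncard hunion (Set.toFinite _)
            have h2 := Set.ncard_union_le
              {ρ : V → Option Bool | (primeImplicant2 ρ F ∧ ∀ v ∈ s, ρ v ≠ none) ∧
                  ∀ v ∈ sccW F u0, ρ v = piB F u0 true v}
              {ρ : V → Option Bool | (primeImplicant2 ρ F ∧ ∀ v ∈ s, ρ v ≠ none) ∧
                  ∀ v ∈ sccW F u0, ρ v = piB F u0 false v}
            have h3 : (({ρ : V → Option Bool | primeImplicant2 ρ F ∧ ∀ v ∈ s, ρ v ≠ none}).ncard : ℝ) ≤
                (({ρ : V → Option Bool | (primeImplicant2 ρ F ∧ ∀ v ∈ s, ρ v ≠ none) ∧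
                  ∀ v ∈ sccW F u0, ρ v = piB F u0 true v}).ncard : ℝ) +
                (({ρ : V → Option Bool | (primeImplicant2 ρ F ∧ ∀ v ∈ s, ρ v ≠ none) ∧
                  ∀ v ∈ sccW F u0, ρ v = piB F u0 false v}).ncard : ℝ) := by
              exact_mod_cast le_trans h1 h2
            exact h3.trans (add_le_add (hmapb true) (hmapb false))
          refine hn1.trans ?_
          rw [hcardR]
          have hWr : (2 : ℝ) ≤ (Wf.card : ℝ) := by exact_mod_cast hW2
          have hstep1 : (2:ℝ) ^ (((s.card : ℝ) - (Wf.card : ℝ))/2) ≤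
              2 ^ (((s.card : ℝ) - 2)/2) := by
            apply Real.rpow_le_rpow_of_exponent_le (by norm_num)
            linarith
          have hh : (2:ℝ) ^ (((s.card : ℝ) - (Wf.card:ℝ))/2) + 2 ^ (((s.card : ℝ) - (Wf.card:ℝ))/2) =
              2 * 2 ^ (((s.card : ℝ) - (Wf.card:ℝ))/2) := by ring
          rw [hh]
          calc 2 * (2:ℝ) ^ (((s.card : ℝ) - (Wf.card:ℝ))/2)
              ≤ 2 * 2 ^ (((s.card : ℝ) - 2)/2) := by linarith [hstep1]
            _ = 2 ^ ((1:ℝ)) * 2 ^ (((s.card : ℝ) - 2)/2) := by norm_num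
            _ = 2 ^ ((s.card : ℝ)/2) := by
                rw [← Real.rpow_add (by norm_num)]
                congr 1
                ring
      · push_neg at hcyc
        exact ⟨acyclic_partial_bound ht hcyc hv, acyclic_full_bound ht hcyc hv⟩

end Master

section Final

set_option linter.unusedSectionVars false
set_option maxHeartbeats 1000000

open scoped Classical

variable {V : Type*} [DecidableEq V] [Fintype V]

lemma evalLit_negLit (α : V → Bool) (l : Lit V) :
    evalLit α (negLit l) = !(evalLit α l) := by
  unfold evalLit negLit
  cases h : α l.1 <;> cases hl : l.2 <;> simp

lemma sat2_filter_iff (α : V → Bool) (F : CNF2 V) :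
    sat2 α (F.filter (fun c => decide (c.1 ≠ negLit c.2))) ↔ sat2 α F := by
  constructor
  · intro h c hc
    by_cases hta : c.1 = negLit c.2
    · cases he : evalLit α c.2
      · left
        rw [hta, evalLit_negLit, he]
        rfl
      · right
        rfl
    · exact h c (List.mem_filter.2 ⟨hc, by simpa using hta⟩)
  · intro h c hc
    exact h c (List.mem_filter.1 hc).1

lemma prime_filter_iff (ρ : V → Option Bool) (F : CNF2 V) :
    primeImplicant2 ρ F ↔ primeImplicant2 ρ (F.filter (fun c => decide (c.1 ≠ negLit c.2))) := by
  have key : ∀ ρ' : V → Option Bool,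
      implicant2 ρ' F ↔ implicant2 ρ' (F.filter (fun c => decide (c.1 ≠ negLit c.2))) := by
    intro ρ'
    constructor
    · intro h α hα
      exact (sat2_filter_iff α F).2 (h α hα)
    · intro h α hα
      exact (sat2_filter_iff α F).1 (h α hα)
  constructor
  · rintro ⟨h1, h2⟩
    exact ⟨(key ρ).1 h1, fun v hv hc => h2 v hv ((key _).2 hc)⟩
  · rintro ⟨h1, h2⟩
    exact ⟨(key ρ).2 h1, fun v hv hc => h2 v hv ((key _).1 hc)⟩

end Final

theorem prime_implicant_count_2cnf {n : ℕ} (F : CNF2 (Fin n)) :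
    ({ρ : Fin n → Option Bool | primeImplicant2 ρ F}.ncard : ℝ)
      ≤ (3 : ℝ) ^ ((n : ℝ) / 3) + (2 : ℝ) ^ ((n : ℝ) / 2) := by
  classical
  set F' := F.filter (fun c => decide (c.1 ≠ negLit c.2)) with hF'
  have ht : tautFree F' := by
    intro c hc
    simpa using (List.mem_filter.1 hc).2
  have hv : varsIn F' (Finset.univ : Finset (Fin n)) :=
    fun c _ => ⟨Finset.mem_univ _, Finset.mem_univ _⟩
  have hM := master (V := Fin n) (Finset.univ : Finset (Fin n)).card Finset.univ F' le_rfl ht hv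
  have hset : {ρ : Fin n → Option Bool | primeImplicant2 ρ F} =
      {ρ : Fin n → Option Bool | primeImplicant2 ρ F'} := by
    ext ρ
    exact prime_filter_iff ρ F
  have hsub : {ρ : Fin n → Option Bool | primeImplicant2 ρ F'} ⊆
      {ρ : Fin n → Option Bool | primeImplicant2 ρ F' ∧ ∃ v, ρ v = none} ∪
      {ρ : Fin n → Option Bool | primeImplicant2 ρ F' ∧ ∀ v ∈ (Finset.univ : Finset (Fin n)), ρ v ≠ none} := by
    intro ρ hρ
    by_cases hex : ∃ v, ρ v = none
    · exact Or.inl ⟨hρ, hex⟩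
    · push_neg at hex
      exact Or.inr ⟨hρ, fun v _ => hex v⟩
  have hcount : ({ρ : Fin n → Option Bool | primeImplicant2 ρ F'}.ncard : ℝ) ≤
      ({ρ : Fin n → Option Bool | primeImplicant2 ρ F' ∧ ∃ v, ρ v = none}.ncard : ℝ) +
      ({ρ : Fin n → Option Bool | primeImplicant2 ρ F' ∧ ∀ v ∈ (Finset.univ : Finset (Fin n)), ρ v ≠ none}.ncard : ℝ) := by
    have h1 := Set.ncard_le_ncard hsub (Set.toFinite _)
    have h2 := Set.ncard_union_le
      {ρ : Fin n → Option Bool | primeImplicant2 ρ F' ∧ ∃ v, ρ v = none}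
      {ρ : Fin n → Option Bool | primeImplicant2 ρ F' ∧ ∀ v ∈ (Finset.univ : Finset (Fin n)), ρ v ≠ none}
    exact_mod_cast le_trans h1 h2
  have hcard : ((Finset.univ : Finset (Fin n)).card : ℝ) = (n : ℝ) := by
    rw [Finset.card_univ, Fintype.card_fin]
  rw [hset]
  refine hcount.trans ?_
  have hb1 := hM.1
  have hb2 := hM.2
  rw [hcard] at hb1 hb2
  exact add_le_add hb1 hb2
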